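/- Let d be a positive integer, u : {1,…,d} → ℝ, and s ∈ {1,…,d}. Then ∫_{−∞}^{∞} exp(u_s − t) · exp(−(∑_{i=1}^d e^{u_i})·e^{−t}) dt = e^{u_s} / (∑_{i=1}^d e^{u_i}). In particular, under independent standard Gumbel noise added to the utilities u_i, the probability that alternative s attains the maximum perturbed utility equals the softmax value e^{u_s}/∑_i e^{u_i}. -/

import Mathlib

open MeasureTheory Set Real Filter

/-- ∫ x in Ioi 0, exp(-b x) dx = 1/b for b > 0. -/
lemma aux_integral_exp_neg_mul_Ioi {b : ℝ} (hb : 0 < b) :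
    ∫ x : ℝ in Ioi (0:ℝ), Real.exp (-(b * x)) = 1 / b := by
  have hderiv : ∀ x ∈ Ici (0:ℝ),
      HasDerivAt (fun x : ℝ => -Real.exp (-(b * x)) / b) (Real.exp (-(b * x))) x := by
    intro x _
    have h1 : HasDerivAt (fun x : ℝ => -(b * x)) (-b) x := by
      simpa [Pi.neg_def] using ((hasDerivAt_id x).const_mul b).neg
    have h2 : HasDerivAt (fun x : ℝ => -Real.exp (-(b * x)) / b)
        (-(Real.exp (-(b * x)) * -b) / b) x := (h1.exp).neg.div_const b
    convert h2 using 1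
    simp [hb.ne']
  have hint : IntegrableOn (fun x : ℝ => Real.exp (-(b * x))) (Ioi 0) := by
    simpa [mul_comm] using exp_neg_integrableOn_Ioi 0 hb
  have harg : Tendsto (fun x : ℝ => -(b * x)) atTop atBot := by
    have : Tendsto (fun x : ℝ => b * x) atTop atTop :=
      Tendsto.const_mul_atTop hb tendsto_id
    exact tendsto_neg_atBot_iff.mpr this
  have hexp : Tendsto (fun x : ℝ => Real.exp (-(b * x))) atTop (nhds 0) :=
    Real.tendsto_exp_atBot.comp harg
  have htop : Tendsto (fun x : ℝ => -Real.exp (-(b * x)) / b) atTop (nhds 0) := by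
    simpa using (hexp.neg.div_const b)
  rw [integral_Ioi_of_hasDerivAt_of_tendsto' hderiv hint htop]
  field_simp
  simp

/-- The Gumbel-max trick (Yellott's theorem): the probability that alternative s attains
the maximum Gumbel-perturbed utility, written as an integral, equals the softmax value. -/
theorem gumbel_max_softmax (d : ℕ) (hd : 0 < d) (u : Fin d → ℝ) (s : Fin d) :
    ∫ t : ℝ, Real.exp (u s - t) *
        Real.exp (-(∑ i : Fin d, Real.exp (u i)) * Real.exp (-t)) =
      Real.exp (u s) / ∑ i : Fin d, Real.exp (u i) := by
  set S : ℝ := ∑ i : Fin d, Real.exp (u i) with hS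
  have hSpos : 0 < S := by
    have : (0:ℝ) < Real.exp (u ⟨0, hd⟩) := Real.exp_pos _
    exact Finset.sum_pos (fun i _ => Real.exp_pos _) ⟨⟨0, hd⟩, Finset.mem_univ _⟩
  -- change of variables x = exp (-t)
  have himg : (fun t : ℝ => Real.exp (-t)) '' univ = Ioi (0:ℝ) := by
    ext y
    simp only [image_univ, mem_range, mem_Ioi]
    constructor
    · rintro ⟨t, rfl⟩; exact Real.exp_pos _
    · intro hy; exact ⟨-Real.log y, by simp [Real.exp_log hy]⟩
  have hf' : ∀ x ∈ (univ : Set ℝ),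
      HasDerivWithinAt (fun t : ℝ => Real.exp (-t)) (-Real.exp (-x)) univ x := by
    intro x _
    have : HasDerivAt (fun t : ℝ => Real.exp (-t)) (Real.exp (-x) * (-1)) x :=
      (hasDerivAt_neg x).exp
    have h2 : HasDerivAt (fun t : ℝ => Real.exp (-t)) (-Real.exp (-x)) x := by
      simpa [mul_comm] using this
    exact h2.hasDerivWithinAt
  have hinj : InjOn (fun t : ℝ => Real.exp (-t)) univ := by
    intro a _ b _ h
    simpa using Real.exp_injective h
  have hcv := integral_image_eq_integral_abs_deriv_smul MeasurableSet.univ hf' hinj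
    (fun x => Real.exp (-(S * x)))
  rw [himg, aux_integral_exp_neg_mul_Ioi hSpos, setIntegral_univ] at hcv
  have key : ∫ t : ℝ, Real.exp (-t) * Real.exp (-(S * Real.exp (-t))) = 1 / S := by
    rw [hcv]
    congr 1
    ext t
    rw [abs_neg, abs_of_pos (Real.exp_pos _), smul_eq_mul]
  calc ∫ t : ℝ, Real.exp (u s - t) * Real.exp (-S * Real.exp (-t))
      = ∫ t : ℝ, Real.exp (u s) * (Real.exp (-t) * Real.exp (-(S * Real.exp (-t)))) := by
        congr 1; ext t
        rw [Real.exp_sub, neg_mul, div_eq_mul_inv, ← Real.exp_neg]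
        ring
    _ = Real.exp (u s) * (1 / S) := by rw [MeasureTheory.integral_const_mul, key]
    _ = Real.exp (u s) / S := by ring
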